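/- For |q|<1 and ζ with |ζ|<1, ζ ≠ 1 (and denominators nonzero): ₂φ₁(q²,0;q;q²;ζ) = 1 + ζ/((1−ζ)(1−q)) · R(ζ,q;q²), where R(α,β;Q) = Σ_{n≥0} (αβ)^n Q^{n²}/((αQ;Q)_n (βQ;Q)_n). -/

import Mathlib

open Complex

/-- The q-Pochhammer symbol `(a;q)_n = ∏_{j=0}^{n-1} (1 - a q^j)`. -/
noncomputable def qPoch (a q : ℂ) (n : ℕ) : ℂ := ∏ j ∈ Finset.range n, (1 - a * q ^ j)

open Finset Filter

lemma qPoch_zero (a q : ℂ) : qPoch a q 0 = 1 := rfl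

lemma qPoch_succ (a q : ℂ) (n : ℕ) :
    qPoch a q (n + 1) = qPoch a q n * (1 - a * q ^ n) := Finset.prod_range_succ _ _

lemma qPoch_succ' (a q : ℂ) (n : ℕ) :
    qPoch a q (n + 1) = (1 - a) * qPoch (a * q) q n := by
  rw [qPoch, Finset.prod_range_succ']
  simp only [pow_zero, mul_one, qPoch]
  rw [mul_comm]
  congr 1
  apply Finset.prod_congr rfl
  intro j _
  rw [pow_succ']
  ring

lemma one_sub_ne_zero_of_norm_lt_one {z : ℂ} (h : ‖z‖ < 1) : (1 : ℂ) - z ≠ 0 := by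
  intro hz
  rw [sub_eq_zero] at hz
  rw [← hz] at h
  simp at h

lemma qPoch_ne_zero {a q : ℂ} (ha : ‖a‖ < 1) (hq : ‖q‖ ≤ 1) (n : ℕ) :
    qPoch a q n ≠ 0 := by
  apply Finset.prod_ne_zero_iff.mpr
  intro j _
  apply one_sub_ne_zero_of_norm_lt_one
  calc ‖a * q ^ j‖ = ‖a‖ * ‖q‖ ^ j := by rw [norm_mul, norm_pow]
    _ ≤ ‖a‖ * 1 := by
        apply mul_le_mul_of_nonneg_left _ (norm_nonneg a)
        exact pow_le_one₀ (norm_nonneg q) hq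
    _ < 1 := by simpa using ha

/-- `1 - ∑ ≤ ∏ (1 - x i)` for `x i ∈ [0,1]`. -/
lemma one_sub_sum_le_prod_one_sub' (s : Finset ℕ) (x : ℕ → ℝ)
    (h0 : ∀ i ∈ s, 0 ≤ x i) (h1 : ∀ i ∈ s, x i ≤ 1) :
    1 - ∑ i ∈ s, x i ≤ ∏ i ∈ s, (1 - x i) := by
  classical
  induction s using Finset.induction with
  | empty => simp
  | @insert a s hns ih =>
    rw [Finset.sum_insert hns, Finset.prod_insert hns]
    have ha0 := h0 a (Finset.mem_insert_self a s)
    have ha1 := h1 a (Finset.mem_insert_self a s)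
    have ih' := ih (fun i hi => h0 i (Finset.mem_insert_of_mem hi))
      (fun i hi => h1 i (Finset.mem_insert_of_mem hi))
    have hprod0 : 0 ≤ ∏ i ∈ s, (1 - x i) :=
      Finset.prod_nonneg fun i hi => by linarith [h1 i (Finset.mem_insert_of_mem hi)]
    have hsum0 : 0 ≤ ∑ i ∈ s, x i :=
      Finset.sum_nonneg fun i hi => h0 i (Finset.mem_insert_of_mem hi)
    nlinarith [mul_le_mul_of_nonneg_left ih' (by linarith : (0:ℝ) ≤ 1 - x a)]

/-- geometric tail bound -/
lemma geom_partial_le {r : ℝ} (h0 : 0 ≤ r) (h1 : r < 1) (n : ℕ) :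
    ∑ i ∈ Finset.range n, r ^ i ≤ (1 - r)⁻¹ := by
  calc ∑ i ∈ Finset.range n, r ^ i ≤ ∑' i : ℕ, r ^ i :=
        Summable.sum_le_tsum _ (fun i _ => pow_nonneg h0 i) (summable_geometric_of_lt_one h0 h1)
    _ = (1 - r)⁻¹ := tsum_geometric_of_lt_one h0 h1

lemma exists_prod_lower {x r : ℝ} (hx0 : 0 ≤ x) (hx : x < 1) (hr0 : 0 ≤ r) (hr : r < 1) :
    ∃ C > 0, ∀ n : ℕ, C ≤ ∏ j ∈ Finset.range n, (1 - x * r ^ j) := by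
  -- choose J with x * r^J * (1-r)⁻¹ ≤ 1/2
  have hxr : 0 < 1 - r := by linarith
  have hev : ∀ᶠ (J : ℕ) in atTop, r ^ J < (1 - r) / (2 * (x + 1)) := by
    apply (tendsto_pow_atTop_nhds_zero_of_lt_one hr0 hr).eventually_lt_const
    exact div_pos hxr (by positivity)
  obtain ⟨J, hJ⟩ := hev.exists
  have hJ2 : x * r ^ J * (1 - r)⁻¹ ≤ 1 / 2 := by
    rw [mul_inv_le_iff₀ hxr]
    have h1 : x * r ^ J ≤ x * ((1 - r) / (2 * (x + 1))) :=
      mul_le_mul_of_nonneg_left hJ.le hx0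
    have h2 : x * ((1 - r) / (2 * (x + 1))) ≤ (1 - r) / 2 := by
      rw [mul_div_assoc', div_le_div_iff₀ (by positivity) (by norm_num)]
      nlinarith
    calc x * r ^ J ≤ (1 - r) / 2 := h1.trans h2
      _ = 1 / 2 * (1 - r) := by ring
  have hx1 : (0:ℝ) < 1 - x := by linarith
  refine ⟨(1 - x) ^ J * (1 / 2), mul_pos (pow_pos hx1 J) (by norm_num), fun n => ?_⟩
  have hfac : ∀ j : ℕ, 1 - x ≤ 1 - x * r ^ j := by
    intro j
    have : x * r ^ j ≤ x * 1 := by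
      apply mul_le_mul_of_nonneg_left _ hx0
      exact pow_le_one₀ hr0 hr.le
    linarith
  have hfac0 : ∀ j : ℕ, (0:ℝ) ≤ 1 - x * r ^ j := fun j => le_trans (by linarith) (hfac j)
  rcases le_or_gt n J with hn | hn
  · -- head only
    calc (1 - x) ^ J * (1 / 2) ≤ (1 - x) ^ n * 1 := by
          apply mul_le_mul _ (by norm_num) (by norm_num) (pow_nonneg (by linarith) n)
          exact pow_le_pow_of_le_one (by linarith) (by linarith) hn
      _ = ∏ j ∈ Finset.range n, (1 - x) := by rw [mul_one, Finset.prod_const, Finset.card_range]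
      _ ≤ ∏ j ∈ Finset.range n, (1 - x * r ^ j) :=
          Finset.prod_le_prod (fun j _ => by linarith) (fun j _ => hfac j)
  · rw [← Finset.prod_range_mul_prod_Ico _ hn.le]
    have hhead : (1 - x) ^ J ≤ ∏ j ∈ Finset.range J, (1 - x * r ^ j) := by
      calc (1 - x) ^ J = ∏ j ∈ Finset.range J, (1 - x) := by
            rw [Finset.prod_const, Finset.card_range]
        _ ≤ _ := Finset.prod_le_prod (fun j _ => by linarith) (fun j _ => hfac j)
    have htail : (1:ℝ) / 2 ≤ ∏ j ∈ Finset.Ico J n, (1 - x * r ^ j) := by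
      have hsum : ∑ j ∈ Finset.Ico J n, x * r ^ j ≤ 1 / 2 := by
        rw [Finset.sum_Ico_eq_sum_range]
        have : ∀ k, x * r ^ (J + k) = (x * r ^ J) * r ^ k := by
          intro k; rw [pow_add]; ring
        rw [Finset.sum_congr rfl (fun k _ => this k), ← Finset.mul_sum]
        calc x * r ^ J * ∑ k ∈ Finset.range (n - J), r ^ k
            ≤ x * r ^ J * (1 - r)⁻¹ := by
              apply mul_le_mul_of_nonneg_left (geom_partial_le hr0 hr _)
                (mul_nonneg hx0 (pow_nonneg hr0 _))
          _ ≤ 1 / 2 := hJ2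
      have := one_sub_sum_le_prod_one_sub' (Finset.Ico J n) (fun j => x * r ^ j)
        (fun i _ => mul_nonneg hx0 (pow_nonneg hr0 _))
        (fun i _ => by
          have h := hfac0 i
          show x * r ^ i ≤ 1
          linarith)
      linarith
    calc (1 - x) ^ J * (1 / 2) ≤ _ :=
      mul_le_mul hhead htail (by norm_num) (Finset.prod_nonneg (fun j _ => hfac0 j))
lemma norm_le_one_sub_norm {b Q : ℂ} (j : ℕ) :
    1 - ‖b‖ * ‖Q‖ ^ j ≤ ‖1 - b * Q ^ j‖ := by
  have h := norm_sub_norm_le (1 : ℂ) (b * Q ^ j)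
  rw [norm_one, norm_mul, norm_pow] at h
  exact h

lemma exists_qPoch_lower {a Q : ℂ} (ha : ‖a‖ < 1) (hQ : ‖Q‖ < 1) :
    ∃ C > 0, ∀ b : ℂ, ‖b‖ ≤ ‖a‖ → ∀ n : ℕ, C ≤ ‖qPoch b Q n‖ := by
  obtain ⟨C, hC, h⟩ := exists_prod_lower (norm_nonneg a) ha (norm_nonneg Q) hQ
  refine ⟨C, hC, fun b hb n => ?_⟩
  have hfac : ∀ j : ℕ, 1 - ‖a‖ * ‖Q‖ ^ j ≤ ‖1 - b * Q ^ j‖ := by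
    intro j
    refine le_trans ?_ (norm_le_one_sub_norm j)
    have : ‖b‖ * ‖Q‖ ^ j ≤ ‖a‖ * ‖Q‖ ^ j :=
      mul_le_mul_of_nonneg_right hb (pow_nonneg (norm_nonneg Q) j)
    linarith
  have hfac0 : ∀ j : ℕ, (0:ℝ) ≤ 1 - ‖a‖ * ‖Q‖ ^ j := by
    intro j
    have : ‖a‖ * ‖Q‖ ^ j ≤ ‖a‖ * 1 :=
      mul_le_mul_of_nonneg_left (pow_le_one₀ (norm_nonneg Q) hQ.le) (norm_nonneg a)
    nlinarith
  calc C ≤ ∏ j ∈ Finset.range n, (1 - ‖a‖ * ‖Q‖ ^ j) := h n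
    _ ≤ ∏ j ∈ Finset.range n, ‖1 - b * Q ^ j‖ :=
        Finset.prod_le_prod (fun j _ => hfac0 j) (fun j _ => hfac j)
    _ = ‖qPoch b Q n‖ := by rw [qPoch, norm_prod]

noncomputable def Fq (t a Q : ℂ) : ℂ := ∑' n : ℕ, t ^ n / qPoch a Q n

lemma summable_Fq_aux {t Q : ℂ} {C : ℝ} (hC : 0 < C) (b : ℂ)
    (hlow : ∀ n : ℕ, C ≤ ‖qPoch b Q n‖) (ht : ‖t‖ < 1) :
    Summable (fun n : ℕ => t ^ n / qPoch b Q n) := by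
  apply Summable.of_norm_bounded (g := fun n => C⁻¹ * ‖t‖ ^ n)
    ((summable_geometric_of_lt_one (norm_nonneg t) ht).mul_left _)
  intro n
  rw [norm_div, norm_pow]
  calc ‖t‖ ^ n / ‖qPoch b Q n‖ ≤ ‖t‖ ^ n / C :=
      div_le_div_of_nonneg_left (pow_nonneg (norm_nonneg t) n) hC (hlow n)
    _ = C⁻¹ * ‖t‖ ^ n := by rw [div_eq_mul_inv, mul_comm]

lemma summable_Fq {t a Q : ℂ} (ht : ‖t‖ < 1) (ha : ‖a‖ < 1) (hQ : ‖Q‖ < 1) :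
    Summable (fun n : ℕ => t ^ n / qPoch a Q n) := by
  obtain ⟨C, hC, hlow⟩ := exists_qPoch_lower ha hQ
  exact summable_Fq_aux hC a (hlow a le_rfl) ht

lemma Fq_sub_one {t a Q : ℂ} (ht : ‖t‖ < 1) (ha : ‖a‖ < 1) (hQ : ‖Q‖ < 1) :
    Fq t a Q - 1 = ∑' n : ℕ, t ^ (n + 1) / qPoch a Q (n + 1) := by
  rw [Fq, Summable.tsum_eq_zero_add (summable_Fq ht ha hQ)]
  simp [qPoch_zero]

lemma norm_lt_one_of_le {z w : ℂ} (h : ‖z‖ ≤ ‖w‖) (hw : ‖w‖ < 1) : ‖z‖ < 1 := lt_of_le_of_lt h hw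

lemma norm_mul_le_self {z Q : ℂ} (hQ : ‖Q‖ ≤ 1) : ‖z * Q‖ ≤ ‖z‖ := by
  rw [norm_mul]
  exact mul_le_of_le_one_right (norm_nonneg z) hQ

lemma norm_mul_pow_le_self {z Q : ℂ} (hQ : ‖Q‖ ≤ 1) (N : ℕ) : ‖z * Q ^ N‖ ≤ ‖z‖ := by
  rw [norm_mul, norm_pow]
  exact mul_le_of_le_one_right (norm_nonneg z) (pow_le_one₀ (norm_nonneg Q) hQ)

/-- FE1 : `(1 - a) * (F(t,a) - 1) = t * F(t, aQ)` -/
lemma FE1 {t a Q : ℂ} (ht : ‖t‖ < 1) (ha : ‖a‖ < 1) (hQ : ‖Q‖ < 1) :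
    (1 - a) * (Fq t a Q - 1) = t * Fq t (a * Q) Q := by
  have haQ : ‖a * Q‖ < 1 := norm_lt_one_of_le (norm_mul_le_self hQ.le) ha
  rw [Fq_sub_one ht ha hQ, ← tsum_mul_left, Fq, ← tsum_mul_left]
  apply tsum_congr
  intro n
  have h1 : qPoch (a * Q) Q n ≠ 0 := qPoch_ne_zero haQ hQ.le n
  have h2 : (1 : ℂ) - a ≠ 0 := one_sub_ne_zero_of_norm_lt_one ha
  rw [qPoch_succ']
  field_simp
  ring

/-- FE2 : `Q * (F(t,a) - 1) = Q * t * F(t,a) + a * (F(tQ, a) - 1)` -/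
lemma FE2 {t a Q : ℂ} (ht : ‖t‖ < 1) (ha : ‖a‖ < 1) (hQ : ‖Q‖ < 1) :
    Q * (Fq t a Q - 1) = Q * t * Fq t a Q + a * (Fq (t * Q) a Q - 1) := by
  have htQ : ‖t * Q‖ < 1 := norm_lt_one_of_le (norm_mul_le_self hQ.le) ht
  rw [Fq_sub_one ht ha hQ, Fq_sub_one htQ ha hQ, ← tsum_mul_left, Fq, ← tsum_mul_left,
    ← tsum_mul_left]
  rw [← Summable.tsum_add ((summable_Fq ht ha hQ).mul_left (Q * t))
    (((summable_nat_add_iff 1).2 (summable_Fq htQ ha hQ)).mul_left a)]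
  apply tsum_congr
  intro n
  have h1 : qPoch a Q n ≠ 0 := qPoch_ne_zero ha hQ.le n
  have h2 : (1 : ℂ) - a * Q ^ n ≠ 0 := by
    apply one_sub_ne_zero_of_norm_lt_one
    exact norm_lt_one_of_le (norm_mul_pow_le_self hQ.le n) ha
  rw [qPoch_succ]
  field_simp
  ring

/-- Master functional equation. -/
lemma MFE {t a Q : ℂ} (ht : ‖t‖ < 1) (ha : ‖a‖ < 1) (hQ : ‖Q‖ < 1) (hQ0 : Q ≠ 0) :
    (1 - t) * (1 - a) * (Fq t a Q - 1)
      = t * (1 + a * (Fq (t * Q) (a * Q) Q - 1)) := by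
  have haQ : ‖a * Q‖ < 1 := norm_lt_one_of_le (norm_mul_le_self hQ.le) ha
  have h1 := FE1 ht ha hQ
  have h2 := FE2 ht haQ hQ
  have h3 : Q * ((1 - t) * Fq t (a * Q) Q)
      = Q * (1 + a * (Fq (t * Q) (a * Q) Q - 1)) := by linear_combination h2
  have h4 := mul_left_cancel₀ hQ0 h3
  linear_combination (1 - t) * h1 + t * h4

lemma nat_e1 (N : ℕ) : N * (N - 1) + N = N ^ 2 := by
  cases N with
  | zero => rfl
  | succ n => simp only [Nat.succ_sub_one]; ring

lemma nat_e2 (N : ℕ) : N * (N - 1) + N + N = (N + 1) * ((N + 1) - 1) := by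
  cases N with
  | zero => rfl
  | succ n => simp only [Nat.succ_sub_one]; ring

lemma iterate_FE {t a Q : ℂ} (ht : ‖t‖ < 1) (ha : ‖a‖ < 1) (hQ : ‖Q‖ < 1) (hQ0 : Q ≠ 0)
    (N : ℕ) :
    Fq t a Q - 1
      = (∑ k ∈ Finset.range N,
          t ^ (k + 1) * a ^ k * Q ^ (k ^ 2) / (qPoch t Q (k + 1) * qPoch a Q (k + 1)))
        + t ^ N * a ^ N * Q ^ (N * (N - 1)) / (qPoch t Q N * qPoch a Q N)
          * (Fq (t * Q ^ N) (a * Q ^ N) Q - 1) := by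
  induction N with
  | zero => simp [qPoch_zero]
  | succ N ih =>
    rw [ih, Finset.sum_range_succ]
    have htN : ‖t * Q ^ N‖ < 1 := norm_lt_one_of_le (norm_mul_pow_le_self hQ.le N) ht
    have haN : ‖a * Q ^ N‖ < 1 := norm_lt_one_of_le (norm_mul_pow_le_self hQ.le N) ha
    have hMFE := MFE htN haN hQ hQ0
    have e1 : t * Q ^ N * Q = t * Q ^ (N + 1) := by rw [pow_succ]; ring
    have e2 : a * Q ^ N * Q = a * Q ^ (N + 1) := by rw [pow_succ]; ring
    rw [e1, e2] at hMFE
    have hd1 : (1 : ℂ) - t * Q ^ N ≠ 0 := one_sub_ne_zero_of_norm_lt_one htN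
    have hd2 : (1 : ℂ) - a * Q ^ N ≠ 0 := one_sub_ne_zero_of_norm_lt_one haN
    have hD : Fq (t * Q ^ N) (a * Q ^ N) Q - 1
        = t * Q ^ N / ((1 - t * Q ^ N) * (1 - a * Q ^ N))
          + t * Q ^ N * (a * Q ^ N) / ((1 - t * Q ^ N) * (1 - a * Q ^ N))
            * (Fq (t * Q ^ (N + 1)) (a * Q ^ (N + 1)) Q - 1) := by
      rw [div_mul_eq_mul_div, ← add_div, eq_div_iff (mul_ne_zero hd1 hd2)]
      linear_combination hMFE
    rw [hD, mul_add]
    have hpt : qPoch t Q N ≠ 0 := qPoch_ne_zero ht hQ.le N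
    have hpa : qPoch a Q N ≠ 0 := qPoch_ne_zero ha hQ.le N
    have hq1 : Q ^ (N ^ 2) = Q ^ (N * (N - 1)) * Q ^ N := by
      rw [← pow_add, nat_e1]
    have hq2 : Q ^ ((N + 1) * ((N + 1) - 1)) = Q ^ (N * (N - 1)) * Q ^ N * Q ^ N := by
      rw [← pow_add, ← pow_add, nat_e2]
    have hp1 : qPoch t Q (N + 1) = qPoch t Q N * (1 - t * Q ^ N) := qPoch_succ t Q N
    have hp2 : qPoch a Q (N + 1) = qPoch a Q N * (1 - a * Q ^ N) := qPoch_succ a Q N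
    have key1 : t ^ N * a ^ N * Q ^ (N * (N - 1)) / (qPoch t Q N * qPoch a Q N)
        * (t * Q ^ N / ((1 - t * Q ^ N) * (1 - a * Q ^ N)))
        = t ^ (N + 1) * a ^ N * Q ^ (N ^ 2) / (qPoch t Q (N + 1) * qPoch a Q (N + 1)) := by
      rw [hq1, hp1, hp2]
      field_simp
      ring
    have key2 : t ^ N * a ^ N * Q ^ (N * (N - 1)) / (qPoch t Q N * qPoch a Q N)
        * (t * Q ^ N * (a * Q ^ N) / ((1 - t * Q ^ N) * (1 - a * Q ^ N)))
        = t ^ (N + 1) * a ^ (N + 1) * Q ^ ((N + 1) * ((N + 1) - 1))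
          / (qPoch t Q (N + 1) * qPoch a Q (N + 1)) := by
      rw [hq2, hp1, hp2]
      field_simp
      ring
    rw [← mul_assoc, key1, ← mul_assoc]
    linear_combination (Fq (t * Q ^ (N + 1)) (a * Q ^ (N + 1)) Q - 1) * key2

lemma Fq_eq_tsum {t a Q : ℂ} (ht : ‖t‖ < 1) (ha : ‖a‖ < 1) (hQ : ‖Q‖ < 1) (hQ0 : Q ≠ 0) :
    Fq t a Q = 1 + ∑' k : ℕ,
      t ^ (k + 1) * a ^ k * Q ^ (k ^ 2) / (qPoch t Q (k + 1) * qPoch a Q (k + 1)) := by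
  obtain ⟨Ct, hCt, hlt⟩ := exists_qPoch_lower ht hQ
  obtain ⟨Ca, hCa, hla⟩ := exists_qPoch_lower ha hQ
  have hta : ‖t‖ * ‖a‖ < 1 :=
    lt_of_le_of_lt (mul_le_of_le_one_right (norm_nonneg t) ha.le) ht
  have hta0 : (0:ℝ) ≤ ‖t‖ * ‖a‖ := mul_nonneg (norm_nonneg t) (norm_nonneg a)
  set term : ℕ → ℂ := fun k =>
    t ^ (k + 1) * a ^ k * Q ^ (k ^ 2) / (qPoch t Q (k + 1) * qPoch a Q (k + 1)) with hterm
  -- bound on terms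
  have hQpow : ∀ m : ℕ, ‖Q‖ ^ m ≤ 1 := fun m => pow_le_one₀ (norm_nonneg Q) hQ.le
  have hterm_bound : ∀ k : ℕ, ‖term k‖ ≤ (Ct * Ca)⁻¹ * ‖t‖ * (‖t‖ * ‖a‖) ^ k := by
    intro k
    rw [hterm]
    simp only [norm_div, norm_mul, norm_pow]
    have hnum : ‖t‖ ^ (k + 1) * ‖a‖ ^ k * ‖Q‖ ^ (k ^ 2) ≤ ‖t‖ * (‖t‖ * ‖a‖) ^ k := by
      calc ‖t‖ ^ (k + 1) * ‖a‖ ^ k * ‖Q‖ ^ (k ^ 2)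
          ≤ ‖t‖ ^ (k + 1) * ‖a‖ ^ k * 1 := by
            apply mul_le_mul_of_nonneg_left (hQpow _)
            positivity
        _ = ‖t‖ * (‖t‖ * ‖a‖) ^ k := by rw [mul_one, mul_pow, pow_succ]; ring
    calc ‖t‖ ^ (k + 1) * ‖a‖ ^ k * ‖Q‖ ^ (k ^ 2) / (‖qPoch t Q (k + 1)‖ * ‖qPoch a Q (k + 1)‖)
        ≤ (‖t‖ * (‖t‖ * ‖a‖) ^ k) / (Ct * Ca) := by
          apply div_le_div₀ (by positivity) hnum (by positivity)
          exact mul_le_mul (hlt t le_rfl _) (hla a le_rfl _) hCa.le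
            (le_trans hCt.le (hlt t le_rfl _))
      _ = (Ct * Ca)⁻¹ * ‖t‖ * (‖t‖ * ‖a‖) ^ k := by
          rw [div_eq_inv_mul]; ring
  have hgeo : Summable (fun k : ℕ => (Ct * Ca)⁻¹ * ‖t‖ * (‖t‖ * ‖a‖) ^ k) :=
    (summable_geometric_of_lt_one hta0 hta).mul_left _
  have hsumm : Summable term := Summable.of_norm_bounded hgeo hterm_bound
  have htend1 : Filter.Tendsto (fun N => ∑ k ∈ Finset.range N, term k)
      Filter.atTop (nhds (∑' k, term k)) := hsumm.hasSum.tendsto_sum_nat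
  -- uniform bound on the tails
  set M : ℝ := Ca⁻¹ * (‖t‖ * (1 - ‖t‖)⁻¹) with hM
  have hDbound : ∀ N : ℕ, ‖Fq (t * Q ^ N) (a * Q ^ N) Q - 1‖ ≤ M := by
    intro N
    have htN : ‖t * Q ^ N‖ < 1 := norm_lt_one_of_le (norm_mul_pow_le_self hQ.le N) ht
    have haN : ‖a * Q ^ N‖ < 1 := norm_lt_one_of_le (norm_mul_pow_le_self hQ.le N) ha
    rw [Fq_sub_one htN haN hQ]
    have hbd : ∀ n : ℕ, ‖(t * Q ^ N) ^ (n + 1) / qPoch (a * Q ^ N) Q (n + 1)‖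
        ≤ Ca⁻¹ * ‖t‖ ^ (n + 1) := by
      intro n
      rw [norm_div, norm_pow]
      calc ‖t * Q ^ N‖ ^ (n + 1) / ‖qPoch (a * Q ^ N) Q (n + 1)‖
          ≤ ‖t‖ ^ (n + 1) / Ca := by
            apply div_le_div₀ (by positivity)
              (pow_le_pow_left₀ (norm_nonneg _) (norm_mul_pow_le_self hQ.le N) _) hCa
            exact hla (a * Q ^ N) (norm_mul_pow_le_self hQ.le N) (n + 1)
        _ = Ca⁻¹ * ‖t‖ ^ (n + 1) := by rw [div_eq_inv_mul]
    have hgs : Summable (fun n : ℕ => Ca⁻¹ * ‖t‖ ^ (n + 1)) := by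
      have : Summable (fun n : ℕ => ‖t‖ ^ (n + 1)) := by
        simpa [pow_succ] using (summable_geometric_of_lt_one (norm_nonneg t) ht).mul_right ‖t‖
      exact this.mul_left _
    have hns : Summable (fun n : ℕ => ‖(t * Q ^ N) ^ (n + 1) / qPoch (a * Q ^ N) Q (n + 1)‖) :=
      Summable.of_nonneg_of_le (fun n => norm_nonneg _) hbd hgs
    calc ‖∑' n : ℕ, (t * Q ^ N) ^ (n + 1) / qPoch (a * Q ^ N) Q (n + 1)‖
        ≤ ∑' n : ℕ, ‖(t * Q ^ N) ^ (n + 1) / qPoch (a * Q ^ N) Q (n + 1)‖ :=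
          norm_tsum_le_tsum_norm hns
      _ ≤ ∑' n : ℕ, Ca⁻¹ * ‖t‖ ^ (n + 1) := Summable.tsum_le_tsum hbd hns hgs
      _ = M := by
          rw [tsum_mul_left, hM]
          congr 1
          have : ∑' n : ℕ, ‖t‖ ^ (n + 1) = ∑' n : ℕ, ‖t‖ ^ n * ‖t‖ := by
            apply tsum_congr; intro n; rw [pow_succ]
          rw [this, tsum_mul_right, tsum_geometric_of_lt_one (norm_nonneg t) ht]
          ring
  have hM0 : 0 ≤ M := by
    rw [hM]
    have h1 : (0:ℝ) ≤ (1 - ‖t‖)⁻¹ := by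
      apply inv_nonneg.2; linarith
    positivity
  -- remainder tends to zero
  set R : ℕ → ℂ := fun N =>
    t ^ N * a ^ N * Q ^ (N * (N - 1)) / (qPoch t Q N * qPoch a Q N)
      * (Fq (t * Q ^ N) (a * Q ^ N) Q - 1) with hR
  have hRbound : ∀ N : ℕ, ‖R N‖ ≤ (Ct * Ca)⁻¹ * M * (‖t‖ * ‖a‖) ^ N := by
    intro N
    rw [hR]
    simp only [norm_mul, norm_div, norm_pow]
    have h1 : ‖t‖ ^ N * ‖a‖ ^ N * ‖Q‖ ^ (N * (N - 1)) ≤ (‖t‖ * ‖a‖) ^ N := by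
      calc ‖t‖ ^ N * ‖a‖ ^ N * ‖Q‖ ^ (N * (N - 1)) ≤ ‖t‖ ^ N * ‖a‖ ^ N * 1 := by
            apply mul_le_mul_of_nonneg_left (hQpow _); positivity
        _ = (‖t‖ * ‖a‖) ^ N := by rw [mul_one, mul_pow]
    have h2 : ‖t‖ ^ N * ‖a‖ ^ N * ‖Q‖ ^ (N * (N - 1)) / (‖qPoch t Q N‖ * ‖qPoch a Q N‖)
        ≤ (‖t‖ * ‖a‖) ^ N / (Ct * Ca) := by
      apply div_le_div₀ (by positivity) h1 (by positivity)
      exact mul_le_mul (hlt t le_rfl _) (hla a le_rfl _) hCa.le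
        (le_trans hCt.le (hlt t le_rfl _))
    calc ‖t‖ ^ N * ‖a‖ ^ N * ‖Q‖ ^ (N * (N - 1)) / (‖qPoch t Q N‖ * ‖qPoch a Q N‖)
          * ‖Fq (t * Q ^ N) (a * Q ^ N) Q - 1‖
        ≤ ((‖t‖ * ‖a‖) ^ N / (Ct * Ca)) * M := by
          apply mul_le_mul h2 (hDbound N) (norm_nonneg _) (by positivity)
      _ = (Ct * Ca)⁻¹ * M * (‖t‖ * ‖a‖) ^ N := by rw [div_eq_inv_mul]; ring
  have htend2 : Filter.Tendsto R Filter.atTop (nhds 0) := by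
    apply squeeze_zero_norm hRbound
    have := (tendsto_pow_atTop_nhds_zero_of_lt_one hta0 hta).const_mul ((Ct * Ca)⁻¹ * M)
    simpa using this
  have hiter : ∀ N : ℕ, ∑ k ∈ Finset.range N, term k = (Fq t a Q - 1) - R N := by
    intro N
    have := iterate_FE ht ha hQ hQ0 N
    rw [hR, hterm]
    linear_combination -this
  have htend3 : Filter.Tendsto (fun N => ∑ k ∈ Finset.range N, term k)
      Filter.atTop (nhds ((Fq t a Q - 1) - 0)) := by
    simp only [hiter]
    exact Filter.Tendsto.sub tendsto_const_nhds htend2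
  have := tendsto_nhds_unique htend1 htend3
  rw [this]
  ring

/-- The universal mock theta function
`R(α,β;Q) = Σ_{n≥0} (αβ)^n Q^{n²}/((αQ;Q)_n (βQ;Q)_n)`. -/
noncomputable def univR (α β Q : ℂ) : ℂ :=
  ∑' n : ℕ, (α * β) ^ n * Q ^ (n ^ 2) / (qPoch (α * Q) Q n * qPoch (β * Q) Q n)

/-- `₂φ₁(q²,0;q;q²;ζ) = 1 + ζ/((1−ζ)(1−q)) · R(ζ,q;q²)`. -/
theorem twoPhiOne_eq_R_pos_q (q ζ : ℂ) (hq0 : 0 < ‖q‖) (hq1 : ‖q‖ < 1)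
    (hζ : ‖ζ‖ < 1) (hζ1 : ζ ≠ 1) (hq1' : q ≠ 1)
    (hζq : ∀ m : ℕ, ζ * q ^ (2 * m) ≠ 1)
    (hqodd : ∀ m : ℕ, q ^ (2 * m + 1) ≠ 1) :
    ∑' n : ℕ, qPoch (q ^ 2) (q ^ 2) n /
        (qPoch q (q ^ 2) n * qPoch (q ^ 2) (q ^ 2) n) * ζ ^ n
      = 1 + ζ / ((1 - ζ) * (1 - q)) * univR ζ q (q ^ 2) := by
  have hQ : ‖q ^ 2‖ < 1 := by
    rw [norm_pow]
    exact pow_lt_one₀ (norm_nonneg q) hq1 (by norm_num)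
  have hqne : q ≠ 0 := by
    intro h
    rw [h] at hq0
    simp at hq0
  have hQ0 : q ^ 2 ≠ 0 := pow_ne_zero 2 hqne
  -- Step 1: the LHS is Fq ζ q (q^2)
  have hLHS : (∑' n : ℕ, qPoch (q ^ 2) (q ^ 2) n /
      (qPoch q (q ^ 2) n * qPoch (q ^ 2) (q ^ 2) n) * ζ ^ n) = Fq ζ q (q ^ 2) := by
    rw [Fq]
    apply tsum_congr
    intro n
    have hA : qPoch (q ^ 2) (q ^ 2) n ≠ 0 := qPoch_ne_zero hQ hQ.le n
    have hB : qPoch q (q ^ 2) n ≠ 0 := qPoch_ne_zero hq1 hQ.le n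
    field_simp
  rw [hLHS, Fq_eq_tsum hζ hq1 hQ hQ0]
  congr 1
  -- Step 2: identify the series with univR
  rw [univR, ← tsum_mul_left]
  apply tsum_congr
  intro n
  have h1 : (1 : ℂ) - ζ ≠ 0 := one_sub_ne_zero_of_norm_lt_one hζ
  have h2 : (1 : ℂ) - q ≠ 0 := one_sub_ne_zero_of_norm_lt_one hq1
  have hζQ : ‖ζ * q ^ 2‖ < 1 := norm_lt_one_of_le (norm_mul_le_self hQ.le) hζ
  have hqQ : ‖q * q ^ 2‖ < 1 := norm_lt_one_of_le (norm_mul_le_self hQ.le) hq1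
  have hpA : qPoch (ζ * q ^ 2) (q ^ 2) n ≠ 0 := qPoch_ne_zero hζQ hQ.le n
  have hpB : qPoch (q * q ^ 2) (q ^ 2) n ≠ 0 := qPoch_ne_zero hqQ hQ.le n
  rw [qPoch_succ' ζ, qPoch_succ' q, mul_pow]
  field_simp
  ring
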